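/- Let X be a weakly octahedral Banach space and let N be an odd natural number. Then the N-fold injective symmetric tensor product ⊗̂_{ε,s,N} X is locally octahedral. -/

import Mathlib

open Filter Topology

noncomputable section

/-- A Banach space is octahedral (OH). -/
def IsOctahedral (Z : Type*) [NormedAddCommGroup Z] : Prop :=
  ∀ (n : ℕ) (z : Fin n → Z), (∀ i, ‖z i‖ = 1) → ∀ ε : ℝ, 0 < ε →
    ∃ w : Z, ‖w‖ = 1 ∧ ∀ i, ‖z i + w‖ > 2 - ε

/-- Locally octahedral (LOH). -/
def IsLocallyOctahedral (Z : Type*) [NormedAddCommGroup Z] : Prop :=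
  ∀ z : Z, ‖z‖ = 1 → ∀ ε : ℝ, 0 < ε →
    ∃ w : Z, ‖w‖ = 1 ∧ ‖z + w‖ > 2 - ε ∧ ‖z - w‖ > 2 - ε

/-- Weakly octahedral (WOH). -/
def IsWeaklyOctahedral (X : Type*) [NormedAddCommGroup X] [NormedSpace ℝ X] : Prop :=
  ∀ (n : ℕ) (z : Fin n → X), (∀ i, ‖z i‖ = 1) → ∀ f : X →L[ℝ] ℝ, ‖f‖ ≤ 1 →
    ∀ ε : ℝ, 0 < ε → ∃ y : X, ‖y‖ = 1 ∧ ∀ i, ∀ t : ℝ, 0 < t →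
      ‖z i + t • y‖ ≥ (1 - ε) * (|f (z i)| + t) ∧
      ‖z i - t • y‖ ≥ (1 - ε) * (|f (z i)| + t)

/-- Almost square (ASQ), sequential formulation. -/
def IsASQ (Z : Type*) [NormedAddCommGroup Z] : Prop :=
  ∀ (n : ℕ) (z : Fin n → Z), (∀ i, ‖z i‖ = 1) →
    ∃ w : ℕ → Z, (∀ k, ‖w k‖ ≤ 1) ∧
      Tendsto (fun k => ‖w k‖) atTop (nhds 1) ∧
      ∀ i, Tendsto (fun k => ‖z i + w k‖) atTop (nhds 1) ∧
           Tendsto (fun k => ‖z i - w k‖) atTop (nhds 1)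

/-- Almost square (ASQ), finite-ε formulation. -/
def IsASQeps (Z : Type*) [NormedAddCommGroup Z] : Prop :=
  ∀ (n : ℕ) (z : Fin n → Z), (∀ i, ‖z i‖ = 1) → ∀ ε : ℝ, 0 < ε →
    ∃ w : Z, ‖w‖ = 1 ∧ ∀ i, ‖z i + w‖ ≤ 1 + ε ∧ ‖z i - w‖ ≤ 1 + ε

/-- Locally almost square (LASQ), sequential formulation. -/
def IsLASQ (Z : Type*) [NormedAddCommGroup Z] : Prop :=
  ∀ z : Z, ‖z‖ = 1 →
    ∃ w : ℕ → Z, (∀ k, ‖w k‖ ≤ 1) ∧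
      Tendsto (fun k => ‖w k‖) atTop (nhds 1) ∧
      Tendsto (fun k => ‖z + w k‖) atTop (nhds 1) ∧
      Tendsto (fun k => ‖z - w k‖) atTop (nhds 1)

/-- Locally almost square (LASQ), ε formulation. -/
def IsLASQeps (Z : Type*) [NormedAddCommGroup Z] : Prop :=
  ∀ z : Z, ‖z‖ = 1 → ∀ ε : ℝ, 0 < ε →
    ∃ w : Z, ‖w‖ = 1 ∧ ‖z + w‖ ≤ 1 + ε ∧ ‖z - w‖ ≤ 1 + ε

/-- Weakly almost square (WASQ). -/
def IsWASQ (Z : Type*) [NormedAddCommGroup Z] [NormedSpace ℝ Z] : Prop :=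
  ∀ z : Z, ‖z‖ = 1 →
    ∃ w : ℕ → Z, (∀ k, ‖w k‖ ≤ 1) ∧
      Tendsto (fun k => ‖w k‖) atTop (nhds 1) ∧
      Tendsto (fun k => ‖z + w k‖) atTop (nhds 1) ∧
      Tendsto (fun k => ‖z - w k‖) atTop (nhds 1) ∧
      ∀ f : Z →L[ℝ] ℝ, Tendsto (fun k => f (w k)) atTop (nhds 0)

/-- Local diameter two property: every slice of the unit ball has diameter two. -/
def HasLD2P (Z : Type*) [NormedAddCommGroup Z] [NormedSpace ℝ Z] : Prop :=
  ∀ f : Z →L[ℝ] ℝ, ‖f‖ = 1 → ∀ α : ℝ, 0 < α →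
    Metric.diam {x : Z | ‖x‖ ≤ 1 ∧ 1 - α < f x} = 2

/-- Diameter two property: every nonempty relatively weakly open subset of the unit
ball has diameter two. -/
def HasD2P (Z : Type*) [NormedAddCommGroup Z] [NormedSpace ℝ Z] : Prop :=
  ∀ U : Set Z, U.Nonempty → (∀ x ∈ U, ‖x‖ ≤ 1) →
    (∀ x ∈ U, ∃ (n : ℕ) (f : Fin n → Z →L[ℝ] ℝ) (δ : ℝ), 0 < δ ∧
      {y : Z | ‖y‖ ≤ 1 ∧ ∀ i, |f i y - f i x| < δ} ⊆ U) →
    Metric.diam U = 2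

/-- The Schur property. -/
def HasSchurProperty (Z : Type*) [SeminormedAddCommGroup Z] [NormedSpace ℝ Z] : Prop :=
  ∀ (u : ℕ → Z) (x : Z),
    (∀ f : Z →L[ℝ] ℝ, Tendsto (fun k => f (u k)) atTop (nhds (f x))) →
    Tendsto (fun k => ‖u k - x‖) atTop (nhds 0)

/-- The Dunford–Pettis property: every weakly compact operator is
weak-to-norm sequentially continuous. -/
def HasDPP (X : Type*) [NormedAddCommGroup X] [NormedSpace ℝ X] : Prop :=
  ∀ (Y : Type) (_ : NormedAddCommGroup Y) (_ : NormedSpace ℝ Y) (_ : CompleteSpace Y)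
    (T : X →L[ℝ] Y),
    (∃ K : Set (WeakSpace ℝ Y), IsCompact K ∧
      ∀ x : X, ‖x‖ ≤ 1 → toWeakSpace ℝ Y (T x) ∈ K) →
    ∀ (u : ℕ → X) (x : X),
      (∀ f : X →L[ℝ] ℝ, Tendsto (fun k => f (u k)) atTop (nhds (f x))) →
      Tendsto (fun k => ‖T (u k) - T x‖) atTop (nhds 0)

/-- `Z`, together with the bilinear-type map `t`, is (a realization of) the injective
tensor product `X ⊗̂_ε Y`: the span of elementary tensors is dense and the norm of any
linear combination of elementary tensors is given by the injective tensor norm. -/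
def IsInjTensorProduct (X Y Z : Type*) [NormedAddCommGroup X] [NormedSpace ℝ X]
    [NormedAddCommGroup Y] [NormedSpace ℝ Y] [NormedAddCommGroup Z] [NormedSpace ℝ Z]
    (t : X → Y → Z) : Prop :=
  (Submodule.span ℝ (Set.range fun p : X × Y => t p.1 p.2)).topologicalClosure = ⊤ ∧
  ∀ l : List (X × Y),
    ‖(l.map fun p => t p.1 p.2).sum‖ =
      sSup {s : ℝ | ∃ (f : X →L[ℝ] ℝ) (g : Y →L[ℝ] ℝ), ‖f‖ ≤ 1 ∧ ‖g‖ ≤ 1 ∧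
        s = |(l.map fun p => f p.1 * g p.2).sum|}

/-- `Z`, together with the map `t`, is (a realization of) the projective tensor product
`X ⊗̂_π Y`: the span of elementary tensors is dense and the norm of any combination of
elementary tensors is the infimum of `Σ ‖xᵢ‖‖yᵢ‖` over all representations (two formal
combinations represent the same tensor iff they agree against all pairs of functionals). -/
def IsProjTensorProduct (X Y Z : Type*) [NormedAddCommGroup X] [NormedSpace ℝ X]
    [NormedAddCommGroup Y] [NormedSpace ℝ Y] [NormedAddCommGroup Z] [NormedSpace ℝ Z]
    (t : X → Y → Z) : Prop :=
  (Submodule.span ℝ (Set.range fun p : X × Y => t p.1 p.2)).topologicalClosure = ⊤ ∧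
  ∀ l : List (X × Y),
    ‖(l.map fun p => t p.1 p.2).sum‖ =
      sInf {s : ℝ | ∃ l' : List (X × Y),
        (∀ (f : X →L[ℝ] ℝ) (g : Y →L[ℝ] ℝ),
          (l'.map fun p => f p.1 * g p.2).sum = (l.map fun p => f p.1 * g p.2).sum) ∧
        s = (l'.map fun p => ‖p.1‖ * ‖p.2‖).sum}

/-- `Z`, together with the diagonal map `δ : x ↦ x^N`, is (a realization of) the `N`-fold
injective symmetric tensor product `⊗̂_{ε,s,N} X`. -/
def IsInjSymTensorProduct (X : Type*) [NormedAddCommGroup X] [NormedSpace ℝ X] (N : ℕ)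
    (Z : Type*) [NormedAddCommGroup Z] [NormedSpace ℝ Z] (δ : X → Z) : Prop :=
  (Submodule.span ℝ (Set.range δ)).topologicalClosure = ⊤ ∧
  ∀ l : List (ℝ × X),
    ‖(l.map fun p => p.1 • δ p.2).sum‖ =
      sSup {s : ℝ | ∃ f : X →L[ℝ] ℝ, ‖f‖ ≤ 1 ∧
        s = |(l.map fun p => p.1 * (f p.2) ^ N).sum|}

/-- `Z`, together with the diagonal map `δ : x ↦ x^N`, is (a realization of) the `N`-fold
projective symmetric tensor product `⊗̂_{π,s,N} X`. -/
def IsProjSymTensorProduct (X : Type*) [NormedAddCommGroup X] [NormedSpace ℝ X] (N : ℕ)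
    (Z : Type*) [NormedAddCommGroup Z] [NormedSpace ℝ Z] (δ : X → Z) : Prop :=
  (Submodule.span ℝ (Set.range δ)).topologicalClosure = ⊤ ∧
  ∀ l : List (ℝ × X),
    ‖(l.map fun p => p.1 • δ p.2).sum‖ =
      sInf {s : ℝ | ∃ l' : List (ℝ × X),
        (∀ f : X →L[ℝ] ℝ,
          (l'.map fun p => p.1 * (f p.2) ^ N).sum = (l.map fun p => p.1 * (f p.2) ^ N).sum) ∧
        s = (l'.map fun p => |p.1| * ‖p.2‖ ^ N).sum}

/-- An operator `T : X* → Y` is weak*-to-weakly continuous. -/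
def WeakStarToWeakContinuous {X Y : Type*} [NormedAddCommGroup X] [NormedSpace ℝ X]
    [NormedAddCommGroup Y] [NormedSpace ℝ Y] (T : (X →L[ℝ] ℝ) →L[ℝ] Y) : Prop :=
  ∀ g : Y →L[ℝ] ℝ, Continuous fun f : WeakDual ℝ X => g (T f)

/-- The elementary tensor `x ⊗ y` regarded as the operator `x* ↦ x*(x) • y` in `L(X*, Y)`. -/
def elemTensor {X Y : Type*} [NormedAddCommGroup X] [NormedSpace ℝ X]
    [NormedAddCommGroup Y] [NormedSpace ℝ Y] (x : X) (y : Y) : (X →L[ℝ] ℝ) →L[ℝ] Y :=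
  (ContinuousLinearMap.apply ℝ ℝ x).smulRight y

/-- `n(Z, u) = 1`, i.e. `D(Z,u) = {f ∈ B_{Z*} : f(u) = 1}` is a norming set for `Z`. -/
def NormOneUnitary (Z : Type*) [NormedAddCommGroup Z] [NormedSpace ℝ Z] (u : Z) : Prop :=
  ‖u‖ = 1 ∧ ∀ z : Z, ‖z‖ ≤ sSup {r : ℝ | ∃ g : Z →L[ℝ] ℝ, ‖g‖ ≤ 1 ∧ g u = 1 ∧ r = |g z|}

/-- Asplund space: every closed separable subspace has separable dual. -/
def IsAsplund (Y : Type*) [NormedAddCommGroup Y] [NormedSpace ℝ Y] : Prop :=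
  ∀ S : Submodule ℝ Y, IsClosed (S : Set Y) → TopologicalSpace.SeparableSpace S →
    TopologicalSpace.SeparableSpace ((↥S) →L[ℝ] ℝ)

/-- The (metric) approximation-type property: finite-rank operators approximate the
identity uniformly on compact sets. -/
def HasAP (E : Type*) [NormedAddCommGroup E] [NormedSpace ℝ E] : Prop :=
  ∀ K : Set E, IsCompact K → ∀ ε : ℝ, 0 < ε →
    ∃ T : E →L[ℝ] E, FiniteDimensional ℝ (LinearMap.range (T : E →ₗ[ℝ] E)) ∧
      ∀ x ∈ K, ‖T x - x‖ ≤ ε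

end


set_option maxHeartbeats 1000000

section AuxLemmas

lemma aux_abs_pow_sub_pow (n : ℕ) (a b C : ℝ) (ha : |a| ≤ C) (hb : |b| ≤ C) :
    |a ^ n - b ^ n| ≤ n * C ^ (n - 1) * |a - b| := by
  induction n with
  | zero => simp
  | succ n ih =>
    have hC : 0 ≤ C := le_trans (abs_nonneg a) ha
    have key : a ^ (n + 1) - b ^ (n + 1) = a * (a ^ n - b ^ n) + (a - b) * b ^ n := by ring
    have h1 : |a ^ (n + 1) - b ^ (n + 1)| ≤ |a| * |a ^ n - b ^ n| + |a - b| * |b| ^ n := by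
      rw [key]
      refine (abs_add_le _ _).trans ?_
      rw [abs_mul, abs_mul, abs_pow]
    have h2 : |a| * |a ^ n - b ^ n| ≤ C * (n * C ^ (n - 1) * |a - b|) := by
      apply mul_le_mul ha ih (abs_nonneg _) hC
    have h3 : |a - b| * |b| ^ n ≤ |a - b| * C ^ n :=
      mul_le_mul_of_nonneg_left (pow_le_pow_left₀ (abs_nonneg _) hb n) (abs_nonneg _)
    have h4 : C * (n * C ^ (n - 1) * |a - b|) ≤ n * C ^ n * |a - b| := by
      rcases Nat.eq_zero_or_pos n with h | h
      · simp [h]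
      · have : C ^ (n - 1) * C = C ^ n := by
          rw [← pow_succ, Nat.sub_add_cancel h]
        calc C * (↑n * C ^ (n - 1) * |a - b|) = ↑n * (C ^ (n - 1) * C) * |a - b| := by ring
          _ = ↑n * C ^ n * |a - b| := by rw [this]
          _ ≤ ↑n * C ^ n * |a - b| := le_rfl
    calc |a ^ (n + 1) - b ^ (n + 1)| ≤ |a| * |a ^ n - b ^ n| + |a - b| * |b| ^ n := h1
      _ ≤ C * (n * C ^ (n - 1) * |a - b|) + |a - b| * C ^ n := add_le_add h2 h3
      _ ≤ n * C ^ n * |a - b| + |a - b| * C ^ n := by linarith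
      _ = (n + 1 : ℕ) * C ^ ((n + 1) - 1) * |a - b| := by push_cast; ring_nf

lemma aux_list_sum_sub_le {α : Type*} (l : List α) (a b c : α → ℝ)
    (h : ∀ x ∈ l, |a x - b x| ≤ c x) :
    |(l.map a).sum - (l.map b).sum| ≤ (l.map c).sum := by
  induction l with
  | nil => simp
  | cons x l ih =>
    simp only [List.map_cons, List.sum_cons]
    have h1 := h x List.mem_cons_self
    have h2 := ih (fun y hy => h y (List.mem_cons_of_mem x hy))
    calc |a x + (l.map a).sum - (b x + (l.map b).sum)|
        = |(a x - b x) + ((l.map a).sum - (l.map b).sum)| := by ring_nf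
      _ ≤ |a x - b x| + |(l.map a).sum - (l.map b).sum| := abs_add_le _ _
      _ ≤ c x + (l.map c).sum := add_le_add h1 h2

lemma aux_list_abs_sum_le {α : Type*} (l : List α) (a c : α → ℝ)
    (h : ∀ x ∈ l, |a x| ≤ c x) :
    |(l.map a).sum| ≤ (l.map c).sum := by
  have := aux_list_sum_sub_le l a (fun _ => 0) c (by simpa using h)
  simpa using this

lemma aux_list_sum_mul {α : Type*} (l : List α) (r : ℝ) (c : α → ℝ) :
    (l.map fun x => r * c x).sum = r * (l.map c).sum := by
  induction l with
  | nil => simp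
  | cons x l ih => simp [ih]; ring

variable {X : Type*} [NormedAddCommGroup X] [NormedSpace ℝ X]

lemma woh_span {X : Type*} [NormedAddCommGroup X] [NormedSpace ℝ X]
    (hX : IsWeaklyOctahedral X) (E : Submodule ℝ X) [FiniteDimensional ℝ E]
    (f : X →L[ℝ] ℝ) (hf : ‖f‖ ≤ 1) (θ : ℝ) (hθ : 0 < θ) (hθ1 : θ < 1) :
    ∃ y : X, ‖y‖ = 1 ∧ ∀ e ∈ E, ∀ t : ℝ,
      (1 - θ) * (|f e| + |t|) - 3 * θ * ‖e‖ ≤ ‖e + t • y‖ := by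
  have hcomp : IsCompact (Metric.sphere (0 : E) 1) := isCompact_sphere 0 1
  -- finite θ-net of the sphere of E
  obtain ⟨T, hT⟩ := hcomp.elim_finite_subcover
      (fun v : Metric.sphere (0 : E) 1 => Metric.ball (v : E) θ)
      (fun v => Metric.isOpen_ball)
      (fun x hx => Set.mem_iUnion.2 ⟨⟨x, hx⟩, Metric.mem_ball_self hθ⟩)
  set n := T.card with hn
  set zfun : Fin n → X := fun i => ((T.equivFin.symm i : Metric.sphere (0 : E) 1) : E) with hz
  have hznorm : ∀ i, ‖zfun i‖ = 1 := by
    intro i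
    have := (T.equivFin.symm i : Metric.sphere (0 : E) 1).2
    rw [mem_sphere_zero_iff_norm] at this
    exact this
  obtain ⟨y, hy, hY⟩ := hX n zfun hznorm f hf θ hθ
  refine ⟨y, hy, ?_⟩
  -- first for unit vectors of E and arbitrary t
  have key : ∀ e ∈ E, ‖e‖ = 1 → ∀ t : ℝ,
      (1 - θ) * (|f e| + |t|) - 2 * θ ≤ ‖e + t • y‖ := by
    intro e heE he t
    have hfe : |f e| ≤ 1 := by
      have := f.le_opNorm e
      rw [he] at this
      calc |f e| = ‖f e‖ := rfl
        _ ≤ ‖f‖ * 1 := this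
        _ ≤ 1 := by linarith
    rcases lt_trichotomy t 0 with htneg | rfl | htpos
    rotate_left
    · simp only [abs_zero, zero_smul, add_zero]
      rw [he]
      nlinarith [abs_nonneg (f e)]
    all_goals {
      have heS : (⟨e, heE⟩ : E) ∈ Metric.sphere (0 : E) 1 := by
        rw [mem_sphere_zero_iff_norm]; exact he
      have hcov := hT heS
      rw [Set.mem_iUnion₂] at hcov
      obtain ⟨v, hvT, hvb⟩ := hcov
      set i := T.equivFin ⟨v, hvT⟩ with hi
      have hzi : zfun i = ((v : E) : X) := by simp [hz, hi]
      have hdist : ‖((v : E) : X) - e‖ < θ := by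
        rw [Metric.mem_ball] at hvb
        have h' : dist (⟨e, heE⟩ : E) (v : E) < θ := hvb
        rw [dist_eq_norm] at h'
        have h'' : ‖e - ((v : E) : X)‖ < θ := h'
        rw [norm_sub_rev] at h''
        exact h''
      have hfv : |f e| - θ ≤ |f ((v : E) : X)| := by
        have h1 : |f e - f ((v : E) : X)| ≤ ‖e - ((v : E) : X)‖ := by
          calc |f e - f ((v : E) : X)| = ‖f (e - ((v : E) : X))‖ := by rw [map_sub]; rfl
            _ ≤ ‖f‖ * ‖e - ((v : E) : X)‖ := f.le_opNorm _
            _ ≤ 1 * ‖e - ((v : E) : X)‖ :=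
                mul_le_mul_of_nonneg_right hf (norm_nonneg _)
            _ = ‖e - ((v : E) : X)‖ := one_mul _
        have h2 := abs_sub_abs_le_abs_sub (f e) (f ((v : E) : X))
        rw [norm_sub_rev] at hdist
        linarith
      first
      | · -- t < 0
          obtain ⟨_, hm⟩ := hY i (-t) (by linarith)
          rw [hzi] at hm
          have htri : ‖((v : E) : X) - (-t) • y‖ ≤ ‖((v : E) : X) - e‖ + ‖e + t • y‖ := by
            have h3 := norm_add_le (((v : E) : X) - e) (e + t • y)
            have heq : ((v : E) : X) - e + (e + t • y) = ((v : E) : X) - (-t) • y := by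
              rw [neg_smul, sub_neg_eq_add]; abel
            rw [heq] at h3
            exact h3
          have habs : |t| = -t := abs_of_neg htneg
          rw [habs]
          nlinarith [abs_nonneg (f e)]
      | · -- t > 0
          obtain ⟨hp, _⟩ := hY i t htpos
          rw [hzi] at hp
          have htri : ‖((v : E) : X) + t • y‖ ≤ ‖((v : E) : X) - e‖ + ‖e + t • y‖ := by
            have h3 := norm_add_le (((v : E) : X) - e) (e + t • y)
            have heq : ((v : E) : X) - e + (e + t • y) = ((v : E) : X) + t • y := by abel
            rw [heq] at h3
            exact h3
          have habs : |t| = t := abs_of_pos htpos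
          rw [habs]
          nlinarith [abs_nonneg (f e)]
    }
  -- now the general statement by scaling
  intro e heE t
  rcases eq_or_ne e 0 with rfl | he0
  · simp only [map_zero, abs_zero, norm_zero, zero_add, mul_zero]
    rw [norm_smul, hy, mul_one, Real.norm_eq_abs]
    nlinarith [abs_nonneg t]
  have hen : ‖e‖ ≠ 0 := norm_ne_zero_iff.2 he0
  have henpos : (0:ℝ) < ‖e‖ := norm_pos_iff.2 he0
  have hmem : (‖e‖⁻¹ • e) ∈ E := E.smul_mem _ heE
  have hnorm1 : ‖‖e‖⁻¹ • e‖ = 1 := by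
    rw [norm_smul, norm_inv, norm_norm, inv_mul_cancel₀ hen]
  have hk := key _ hmem hnorm1 (t / ‖e‖)
  have hsm : ‖e‖ * ‖‖e‖⁻¹ • e + (t / ‖e‖) • y‖ = ‖e + t • y‖ := by
    rw [← norm_smul_of_nonneg henpos.le, smul_add, smul_smul, smul_smul,
      mul_inv_cancel₀ hen, one_smul, mul_div_cancel₀ _ hen]
  have hfs : |f (‖e‖⁻¹ • e)| = ‖e‖⁻¹ * |f e| := by
    rw [map_smul, smul_eq_mul, abs_mul, abs_of_pos (inv_pos.2 henpos)]
  have hts : |t / ‖e‖| = |t| / ‖e‖ := by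
    rw [abs_div, abs_of_pos henpos]
  rw [hfs, hts] at hk
  have hmul := mul_le_mul_of_nonneg_left hk henpos.le
  rw [hsm] at hmul
  have hexp : ‖e‖ * ((1 - θ) * (‖e‖⁻¹ * |f e| + |t| / ‖e‖) - 2 * θ)
      = (1 - θ) * (|f e| + |t|) - 2 * θ * ‖e‖ := by
    field_simp
  rw [hexp] at hmul
  nlinarith [norm_nonneg e]

lemma woh_functionals_mk (E : Submodule ℝ X)
    (f : X →L[ℝ] ℝ) (hf : ‖f‖ ≤ 1) (θ : ℝ) (hθ : 0 < θ) (hθ1 : θ ≤ 1/100)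
    (y : X) (hy : ‖y‖ = 1)
    (H : ∀ e ∈ E, ∀ t : ℝ, (1 - θ) * (|f e| + |t|) - 3 * θ * ‖e‖ ≤ ‖e + t • y‖)
    (s : ℝ) (hs : |s| = 1) :
    ∃ g : X →L[ℝ] ℝ, ‖g‖ ≤ 1 ∧ g y = (1 + 11*θ)⁻¹ * s ∧
      ∀ e ∈ E, g e = (1 + 11*θ)⁻¹ * f e := by
  have habs : ∀ e ∈ E, |f e| ≤ ‖e‖ := by
    intro e _
    calc |f e| = ‖f e‖ := rfl
      _ ≤ ‖f‖ * ‖e‖ := f.le_opNorm e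
      _ ≤ 1 * ‖e‖ := mul_le_mul_of_nonneg_right hf (norm_nonneg _)
      _ = ‖e‖ := one_mul _
  -- y ∉ E
  have hyE : y ∉ E := by
    intro hyE
    have h1 := H y hyE (-1)
    have h2 : y + (-1 : ℝ) • y = 0 := by
      rw [neg_smul, one_smul, add_neg_cancel]
    rw [h2, norm_zero, hy] at h1
    have := abs_nonneg (f y)
    simp only [abs_neg, abs_one] at h1
    nlinarith
  -- the crucial norm bound on E ⊔ ℝ∙y
  have hbound : ∀ e ∈ E, ∀ c : ℝ, |f e| + |c| ≤ (1 + 11*θ) * ‖e + c • y‖ := by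
    intro e he c
    have h1 := H e he c
    have h2 : ‖e‖ ≤ ‖e + c • y‖ + |c| := by
      have h3 := norm_add_le (e + c • y) ((-c) • y)
      have h4 : e + c • y + (-c) • y = e := by
        rw [neg_smul]; abel
      rw [h4, norm_smul, hy, mul_one, Real.norm_eq_abs, abs_neg] at h3
      exact h3
    have h3 := habs e he
    have hA := abs_nonneg (f e)
    have hB := abs_nonneg c
    have hu := norm_nonneg (e + c • y)
    have hw := norm_nonneg e
    have k0 : 3*θ*‖e‖ ≤ 3*θ*(‖e + c • y‖ + |c|) :=
      mul_le_mul_of_nonneg_left h2 (by linarith)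
    have k1 : (1-θ)*|f e| + (1-4*θ)*|c| ≤ (1+3*θ)*‖e + c • y‖ := by nlinarith
    have k2 : (1-4*θ)*(|f e| + |c|) ≤ (1+3*θ)*‖e + c • y‖ := by nlinarith
    nlinarith [mul_nonneg (mul_nonneg hθ.le hθ.le) hu, mul_nonneg hθ.le hu]
  -- build the partial linear map on E ⊔ ℝ∙y
  have hyE' : y ∉ ((f : X →ₗ[ℝ] ℝ).toPMap E).domain := hyE
  set φ := ((f : X →ₗ[ℝ] ℝ).toPMap E).supSpanSingleton y s hyE' with hφ
  have hdom : φ.domain = E ⊔ (ℝ ∙ y) := rfl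
  have happ : ∀ (e : X) (he : e ∈ E) (c : ℝ) (hm : e + c • y ∈ φ.domain),
      φ ⟨e + c • y, hm⟩ = f e + c * s := by
    intro e he c hm
    have := LinearPMap.supSpanSingleton_apply_mk
      ((f : X →ₗ[ℝ] ℝ).toPMap E) y s hyE' e he c
    exact this
  have hmem : ∀ (e : X), e ∈ E → ∀ c : ℝ, e + c • y ∈ φ.domain := by
    intro e he c
    rw [hdom]
    exact Submodule.add_mem_sup he (Submodule.smul_mem _ _ (Submodule.mem_span_singleton_self y))
  -- bound the partial map
  have hb : ∀ v : φ.domain, ‖φ.toFun v‖ ≤ (1 + 11*θ) * ‖v‖ := by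
    intro v
    have hv2 : (v : X) ∈ E ⊔ (ℝ ∙ y) := hdom ▸ v.2
    obtain ⟨e, he, w, hw, hv⟩ := Submodule.mem_sup.1 hv2
    obtain ⟨c, rfl⟩ := Submodule.mem_span_singleton.1 hw
    have hveq : v = ⟨e + c • y, hmem e he c⟩ := Subtype.ext hv.symm
    have : φ.toFun v = f e + c * s := by
      rw [hveq]; exact happ e he c _
    rw [this]
    have hnv : ‖v‖ = ‖e + c • y‖ := by rw [hveq]; rfl
    rw [hnv, Real.norm_eq_abs]
    calc |f e + c * s| ≤ |f e| + |c * s| := abs_add_le _ _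
      _ = |f e| + |c| := by rw [abs_mul, hs, mul_one]
      _ ≤ (1 + 11*θ) * ‖e + c • y‖ := hbound e he c
  set φc : φ.domain →L[ℝ] ℝ := LinearMap.mkContinuous φ.toFun (1 + 11*θ) hb with hφc
  obtain ⟨G, hGext, hGnorm⟩ := exists_extension_norm_eq φ.domain φc
  have hGle : ‖G‖ ≤ 1 + 11*θ := by
    rw [hGnorm]
    exact LinearMap.mkContinuous_norm_le _ (by linarith) _
  refine ⟨(1 + 11*θ)⁻¹ • G, ?_, ?_, ?_⟩
  · refine ContinuousLinearMap.opNorm_le_bound _ zero_le_one (fun x => ?_)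
    have h1 : ‖G x‖ ≤ (1 + 11*θ) * ‖x‖ := by
      calc ‖G x‖ ≤ ‖G‖ * ‖x‖ := G.le_opNorm x
        _ ≤ (1 + 11*θ) * ‖x‖ := mul_le_mul_of_nonneg_right hGle (norm_nonneg _)
    simp only [ContinuousLinearMap.smul_apply, smul_eq_mul]
    rw [Real.norm_eq_abs, abs_mul, abs_of_pos (by positivity : (0:ℝ) < (1+11*θ)⁻¹)]
    rw [one_mul, inv_mul_le_iff₀ (by linarith : (0:ℝ) < 1 + 11*θ)]
    calc |G x| = ‖G x‖ := rfl
      _ ≤ (1 + 11*θ) * ‖x‖ := h1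
  · have hyF : y ∈ φ.domain := by
      have := hmem 0 E.zero_mem 1
      simpa using this
    have hval : φc ⟨y, hyF⟩ = s := by
      have h0 : φ.toFun ⟨y, hyF⟩ = f 0 + 1 * s := by
        have hveq : (⟨y, hyF⟩ : φ.domain) = ⟨(0:X) + (1:ℝ) • y, hmem 0 E.zero_mem 1⟩ :=
          Subtype.ext (by simp)
        rw [hveq]; exact happ 0 E.zero_mem 1 _
      exact (LinearMap.mkContinuous_apply _ _ _ _).trans (by simpa using h0)
    have hGy : G y = s := (hGext ⟨y, hyF⟩).trans hval
    simp only [ContinuousLinearMap.smul_apply, smul_eq_mul]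
    rw [hGy]
  · intro e he
    have heF : e ∈ φ.domain := by
      have := hmem e he 0
      simpa using this
    have hval : φc ⟨e, heF⟩ = f e := by
      have h0 : φ.toFun ⟨e, heF⟩ = f e + 0 * s := by
        have hveq : (⟨e, heF⟩ : φ.domain) = ⟨e + (0:ℝ) • y, hmem e he 0⟩ :=
          Subtype.ext (by simp)
        rw [hveq]; exact happ e he 0 _
      exact (LinearMap.mkContinuous_apply _ _ _ _).trans (by simpa using h0)
    have hGe : G e = f e := (hGext ⟨e, heF⟩).trans hval
    simp only [ContinuousLinearMap.smul_apply, smul_eq_mul]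
    rw [hGe]

lemma woh_functionals (hX : IsWeaklyOctahedral X) (E : Submodule ℝ X) [FiniteDimensional ℝ E]
    (f : X →L[ℝ] ℝ) (hf : ‖f‖ ≤ 1) (κ : ℝ) (hκ : 0 < κ) :
    ∃ (y : X) (g h : X →L[ℝ] ℝ), ‖y‖ = 1 ∧ ‖g‖ ≤ 1 ∧ ‖h‖ ≤ 1 ∧
      1 - κ ≤ g y ∧ h y ≤ -(1 - κ) ∧
      ∀ e ∈ E, |g e - f e| ≤ κ * ‖e‖ ∧ |h e - f e| ≤ κ * ‖e‖ := by
  set θ := min (κ/11) (1/100) with hθdef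
  have hθ : 0 < θ := lt_min (by positivity) (by norm_num)
  have hθ1 : θ ≤ 1/100 := min_le_right _ _
  have hθκ : 11 * θ ≤ κ := by
    have := min_le_left (κ/11) (1/100)
    calc 11 * θ ≤ 11 * (κ/11) := by linarith
      _ = κ := by ring
  obtain ⟨y, hy, H⟩ := woh_span hX E f hf θ hθ (by linarith : θ < 1)
  obtain ⟨g, hg1, hgy, hge⟩ := woh_functionals_mk E f hf θ hθ hθ1 y hy H 1 (by norm_num)
  obtain ⟨h, hh1, hhy, hhe⟩ := woh_functionals_mk E f hf θ hθ hθ1 y hy H (-1) (by norm_num)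
  have hpos : (0:ℝ) < 1 + 11*θ := by linarith
  have hinv : 1 - 11*θ ≤ (1 + 11*θ)⁻¹ := by
    rw [inv_eq_one_div, le_div_iff₀ hpos]
    nlinarith
  have hinv1 : (1 + 11*θ)⁻¹ ≤ 1 := by
    rw [inv_le_one_iff₀]; right; linarith
  have hdev : ∀ e ∈ E, ∀ G : X →L[ℝ] ℝ, G e = (1 + 11*θ)⁻¹ * f e → |G e - f e| ≤ κ * ‖e‖ := by
    intro e he G hGe
    have hfe : |f e| ≤ ‖e‖ := by
      calc |f e| = ‖f e‖ := rfl
        _ ≤ ‖f‖ * ‖e‖ := f.le_opNorm e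
        _ ≤ 1 * ‖e‖ := mul_le_mul_of_nonneg_right hf (norm_nonneg _)
        _ = ‖e‖ := one_mul _
    have : G e - f e = ((1 + 11*θ)⁻¹ - 1) * f e := by rw [hGe]; ring
    rw [this, abs_mul]
    have h1 : |(1 + 11*θ)⁻¹ - 1| ≤ 11*θ := by
      rw [abs_of_nonpos (by linarith)]
      linarith
    calc |(1 + 11*θ)⁻¹ - 1| * |f e| ≤ (11*θ) * ‖e‖ :=
        mul_le_mul h1 hfe (abs_nonneg _) (by linarith)
      _ ≤ κ * ‖e‖ := mul_le_mul_of_nonneg_right hθκ (norm_nonneg _)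
  refine ⟨y, g, h, hy, hg1, hh1, ?_, ?_, fun e he => ⟨hdev e he g (hge e he), hdev e he h (hhe e he)⟩⟩
  · rw [hgy, mul_one]; linarith
  · rw [hhy]; nlinarith

lemma aux_list_flip {X : Type*} (N : ℕ) (hN : Odd N) (l : List (ℝ × X)) (F : X → ℝ) :
    (l.map fun p => p.1 * (-(F p.2)) ^ N).sum = -(l.map fun p => p.1 * (F p.2) ^ N).sum := by
  induction l with
  | nil => simp
  | cons p l ih =>
    simp only [List.map_cons, List.sum_cons, hN.neg_pow] at ih ⊢
    rw [ih]
    ring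

lemma aux_list_bdd {X : Type*} [NormedAddCommGroup X] [NormedSpace ℝ X]
    (N : ℕ) (l : List (ℝ × X)) (f : X →L[ℝ] ℝ) (hf : ‖f‖ ≤ 1) :
    |(l.map fun p => p.1 * (f p.2) ^ N).sum| ≤ (l.map fun p => |p.1| * ‖p.2‖ ^ N).sum := by
  apply aux_list_abs_sum_le
  intro p _
  rw [abs_mul, abs_pow]
  refine mul_le_mul_of_nonneg_left (pow_le_pow_left₀ (abs_nonneg _) ?_ N) (abs_nonneg _)
  calc |f p.2| = ‖f p.2‖ := rfl
    _ ≤ ‖f‖ * ‖p.2‖ := f.le_opNorm _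
    _ ≤ 1 * ‖p.2‖ := mul_le_mul_of_nonneg_right hf (norm_nonneg _)
    _ = ‖p.2‖ := one_mul _


end AuxLemmas

theorem statement12 (X : Type*) [NormedAddCommGroup X] [NormedSpace ℝ X] [CompleteSpace X]
    (hX : IsWeaklyOctahedral X) (N : ℕ) (hN : Odd N)
    (Z : Type*) [NormedAddCommGroup Z] [NormedSpace ℝ Z] [CompleteSpace Z]
    (δ : X → Z) (hδ : IsInjSymTensorProduct X N Z δ) :
    IsLocallyOctahedral Z := by
  obtain ⟨hdense, hnorm⟩ := hδ
  intro z hz ε hε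
  have hN1 : 1 ≤ N := hN.pos
  set ε' := min ε 1 with hε'def
  have hε'pos : 0 < ε' := lt_min hε one_pos
  have hε'ε : ε' ≤ ε := min_le_left _ _
  have hε'1 : ε' ≤ 1 := min_le_right _ _
  set η := ε'/6 with hηdef
  have hηpos : 0 < η := by positivity
  -- density: find u close to z
  have hzc : z ∈ closure ((Submodule.span ℝ (Set.range δ) : Submodule ℝ Z) : Set Z) := by
    rw [← Submodule.topologicalClosure_coe, hdense]
    trivial
  obtain ⟨u, huspan, hud⟩ := Metric.mem_closure_iff.1 hzc η hηpos
  rw [dist_eq_norm] at hud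
  obtain ⟨n₀, c, gg, hu⟩ := Submodule.mem_span_set'.1 huspan
  choose xx hxx using fun i => (gg i).2
  set l : List (ℝ × X) := List.ofFn (fun i => (c i, xx i)) with hldef
  have hlsum : (l.map fun p => p.1 • δ p.2).sum = u := by
    rw [hldef, List.map_ofFn, List.sum_ofFn]
    simp only [Function.comp]
    rw [← hu]
    congr 1
    ext i
    rw [hxx i]
  -- the norming functional f
  set S := {s : ℝ | ∃ f : X →L[ℝ] ℝ, ‖f‖ ≤ 1 ∧
    s = |(l.map fun p => p.1 * (f p.2) ^ N).sum|} with hSdef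
  set M := (l.map fun p => |p.1| * ‖p.2‖ ^ N).sum with hMdef
  have hM0 : 0 ≤ M := by
    apply List.sum_nonneg
    intro x hx
    obtain ⟨p, _, rfl⟩ := List.mem_map.1 hx
    positivity
  have hSbdd : ∀ s ∈ S, s ≤ M := by
    rintro s ⟨f, hf, rfl⟩
    exact aux_list_bdd N l f hf
  have hSne : S.Nonempty := ⟨_, 0, by simp, rfl⟩
  have hul : ‖u‖ = sSup S := by rw [← hlsum]; exact hnorm l
  have hu1 : 1 - η ≤ ‖u‖ := by
    have := norm_add_le (z - u) u
    rw [sub_add_cancel, hz] at this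
    linarith
  obtain ⟨s₀, hs₀S, hs₀⟩ := exists_lt_of_lt_csSup hSne
    (show ‖u‖ - η < sSup S by rw [← hul]; linarith)
  obtain ⟨f₀, hf₀, rfl⟩ := hs₀S
  obtain ⟨f, hf1, hfσ⟩ : ∃ f : X →L[ℝ] ℝ, ‖f‖ ≤ 1 ∧
      (l.map fun p => p.1 * (f p.2) ^ N).sum
        = |(l.map fun p => p.1 * (f₀ p.2) ^ N).sum| := by
    rcases le_or_gt 0 ((l.map fun p => p.1 * (f₀ p.2) ^ N).sum) with h | h
    · exact ⟨f₀, hf₀, (abs_of_nonneg h).symm⟩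
    · refine ⟨-f₀, by rw [norm_neg]; exact hf₀, ?_⟩
      have hfun : (fun p : ℝ × X => p.1 * ((-f₀) p.2) ^ N)
          = fun p : ℝ × X => p.1 * (-(f₀ p.2)) ^ N := rfl
      rw [hfun, aux_list_flip N hN l (⇑f₀), abs_of_neg h]
  have hfval : 1 - 2*η ≤ (l.map fun p => p.1 * (f p.2) ^ N).sum := by
    rw [hfσ]; linarith
  -- the subspace E
  set sE : Set X := Prod.snd '' {p | p ∈ l} with hsEdef
  have hfinE : sE.Finite := (l.finite_toSet.image _)
  set E : Submodule ℝ X := Submodule.span ℝ sE with hEdef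
  haveI : FiniteDimensional ℝ E := FiniteDimensional.span_of_finite ℝ hfinE
  have hmemE : ∀ p ∈ l, p.2 ∈ E := by
    intro p hp
    exact Submodule.subset_span ⟨p, hp, rfl⟩
  -- choose κ and apply the WOH functionals lemma
  set κ := min (ε' / (6 * N * (M+1))) (1/2) with hκdef
  have hκpos : 0 < κ := by
    apply lt_min _ (by norm_num)
    have : (0:ℝ) < N := by exact_mod_cast hN.pos
    positivity
  have hκhalf : κ ≤ 1/2 := min_le_right _ _
  have hκM : N * κ * (M + 1) ≤ ε'/6 := by
    have h1 : κ ≤ ε' / (6 * N * (M+1)) := min_le_left _ _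
    have hNpos : (0:ℝ) < N := by exact_mod_cast hN.pos
    have h2 : (0:ℝ) < 6 * N * (M+1) := by positivity
    calc N * κ * (M+1) ≤ N * (ε' / (6 * N * (M+1))) * (M+1) := by
          apply mul_le_mul_of_nonneg_right _ (by linarith)
          exact mul_le_mul_of_nonneg_left h1 hNpos.le
      _ = ε' / 6 := by field_simp
  obtain ⟨y, g, h, hy, hg1, hh1, hgy, hhy, hgh⟩ := woh_functionals hX E f hf1 κ hκpos
  -- the tensor w = δ y and its norm
  have hy0 : y ≠ 0 := by intro h0; rw [h0, norm_zero] at hy; norm_num at hy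
  have hwn : ‖δ y‖ = 1 := by
    have hmap : (([((1:ℝ), y)]).map fun p => p.1 • δ p.2).sum = δ y := by simp
    have h1 : ‖δ y‖ = sSup {s : ℝ | ∃ f : X →L[ℝ] ℝ, ‖f‖ ≤ 1 ∧
        s = |(([((1:ℝ), y)]).map fun p => p.1 * (f p.2) ^ N).sum|} := by
      rw [← hmap]; exact hnorm _
    rw [h1]
    apply le_antisymm
    · apply csSup_le
      · exact ⟨_, 0, by simp, rfl⟩
      rintro s ⟨f, hf, rfl⟩
      simp only [List.map_cons, List.map_nil, List.sum_cons, List.sum_nil, add_zero, one_mul]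
      rw [abs_pow]
      apply pow_le_one₀ (abs_nonneg _)
      calc |f y| = ‖f y‖ := rfl
        _ ≤ ‖f‖ * ‖y‖ := f.le_opNorm _
        _ ≤ 1 * 1 := by rw [hy]; exact mul_le_mul_of_nonneg_right hf zero_le_one
        _ = 1 := one_mul _
    · obtain ⟨G, hG1, hGy⟩ := exists_dual_vector ℝ y (norm_ne_zero_iff.2 hy0)
      apply le_csSup
      · refine ⟨1, ?_⟩
        rintro s ⟨f, hf, rfl⟩
        simp only [List.map_cons, List.map_nil, List.sum_cons, List.sum_nil, add_zero, one_mul]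
        rw [abs_pow]
        apply pow_le_one₀ (abs_nonneg _)
        calc |f y| = ‖f y‖ := rfl
          _ ≤ ‖f‖ * ‖y‖ := f.le_opNorm _
          _ ≤ 1 * 1 := by rw [hy]; exact mul_le_mul_of_nonneg_right hf zero_le_one
          _ = 1 := one_mul _
      · refine ⟨G, le_of_eq hG1, ?_⟩
        simp only [List.map_cons, List.map_nil, List.sum_cons, List.sum_nil, add_zero, one_mul]
        rw [hGy, hy]
        simp
  -- generic lower bound for ‖a • δ y + u‖
  have hlow : ∀ (a : ℝ) (G : X →L[ℝ] ℝ), ‖G‖ ≤ 1 →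
      a * (G y)^N + (l.map fun p => p.1 * (G p.2) ^ N).sum ≤ ‖a • δ y + u‖ := by
    intro a G hG
    have hmap : ((((a, y)) :: l).map fun p => p.1 • δ p.2).sum = a • δ y + u := by
      rw [List.map_cons, List.sum_cons, hlsum]
    rw [← hmap, hnorm ((a, y) :: l)]
    have hbdd : BddAbove {s : ℝ | ∃ f : X →L[ℝ] ℝ, ‖f‖ ≤ 1 ∧
        s = |((((a, y)) :: l).map fun p => p.1 * (f p.2) ^ N).sum|} := by
      refine ⟨(((a, y) :: l).map fun p => |p.1| * ‖p.2‖ ^ N).sum, ?_⟩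
      rintro s ⟨f, hf, rfl⟩
      exact aux_list_bdd N _ f hf
    refine le_trans (le_abs_self _) (le_csSup hbdd ⟨G, hG, ?_⟩)
    rw [List.map_cons, List.sum_cons]
  -- the difference estimate for g and h
  have hdiff : ∀ G : X →L[ℝ] ℝ, ‖G‖ ≤ 1 →
      (∀ e ∈ E, |G e - f e| ≤ κ * ‖e‖) →
      1 - 2*η - N * κ * M ≤ (l.map fun p => p.1 * (G p.2) ^ N).sum := by
    intro G hG hGE
    have hpt : ∀ p ∈ l, |p.1 * (G p.2)^N - p.1 * (f p.2)^N|
        ≤ (N * κ) * (|p.1| * ‖p.2‖^N) := by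
      intro p hp
      have hGp : |G p.2| ≤ ‖p.2‖ := by
        calc |G p.2| = ‖G p.2‖ := rfl
          _ ≤ ‖G‖ * ‖p.2‖ := G.le_opNorm _
          _ ≤ 1 * ‖p.2‖ := mul_le_mul_of_nonneg_right hG (norm_nonneg _)
          _ = ‖p.2‖ := one_mul _
      have hfp : |f p.2| ≤ ‖p.2‖ := by
        calc |f p.2| = ‖f p.2‖ := rfl
          _ ≤ ‖f‖ * ‖p.2‖ := f.le_opNorm _
          _ ≤ 1 * ‖p.2‖ := mul_le_mul_of_nonneg_right hf1 (norm_nonneg _)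
          _ = ‖p.2‖ := one_mul _
      have h1 := aux_abs_pow_sub_pow N (G p.2) (f p.2) ‖p.2‖ hGp hfp
      have h2 : |G p.2 - f p.2| ≤ κ * ‖p.2‖ := hGE p.2 (hmemE p hp)
      have hpow : ‖p.2‖ ^ (N-1) * ‖p.2‖ = ‖p.2‖ ^ N := by
        rw [← pow_succ, Nat.sub_add_cancel hN1]
      calc |p.1 * (G p.2)^N - p.1 * (f p.2)^N|
          = |p.1| * |(G p.2)^N - (f p.2)^N| := by rw [← mul_sub, abs_mul]
        _ ≤ |p.1| * (N * ‖p.2‖^(N-1) * |G p.2 - f p.2|) :=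
            mul_le_mul_of_nonneg_left h1 (abs_nonneg _)
        _ ≤ |p.1| * (N * ‖p.2‖^(N-1) * (κ * ‖p.2‖)) := by
            refine mul_le_mul_of_nonneg_left
              (mul_le_mul_of_nonneg_left h2 (by positivity)) (abs_nonneg _)
        _ = (N * κ) * (|p.1| * ‖p.2‖^N) := by rw [← hpow]; ring
    have hsub := aux_list_sum_sub_le l (fun p => p.1 * (G p.2)^N)
      (fun p => p.1 * (f p.2)^N) (fun p => (N * κ) * (|p.1| * ‖p.2‖^N)) hpt
    rw [aux_list_sum_mul l (N * κ) (fun p => |p.1| * ‖p.2‖^N)] at hsub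
    have h3 := (abs_le.1 hsub).1
    have h4 : (N:ℝ) * κ * M = N * κ * (l.map fun p => |p.1| * ‖p.2‖^N).sum := by rw [hMdef]
    rw [hMdef]
    linarith [hfval]
  -- Bernoulli-type bounds
  have hκ0 : (0:ℝ) ≤ 1 - κ := by linarith
  have hbern : 1 - N * κ ≤ (1 - κ)^N := by
    have hb := one_add_mul_le_pow (show (-2:ℝ) ≤ -κ by linarith) N
    calc 1 - (N:ℝ) * κ = 1 + N * (-κ) := by ring
      _ ≤ (1 + -κ)^N := hb
      _ = (1 - κ)^N := by ring_nf
  have hgyN : 1 - N * κ ≤ (g y)^N := by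
    have h1 : (1-κ)^N ≤ (g y)^N := pow_le_pow_left₀ hκ0 hgy N
    linarith
  have hhyN : 1 - N * κ ≤ (-1 : ℝ) * (h y)^N := by
    have h0 : 1 - κ ≤ -h y := by linarith
    have h1 : (1-κ)^N ≤ (-h y)^N := pow_le_pow_left₀ hκ0 h0 N
    have h2 : (-h y)^N = -((h y)^N) := hN.neg_pow _
    linarith
  -- plus estimate
  have hplus : 2 - ε'/2 ≤ ‖δ y + u‖ := by
    have h1 := hlow 1 g hg1
    rw [one_smul] at h1
    have h2 := hdiff g hg1 (fun e he => (hgh e he).1)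
    have h5 : (N:ℝ) * κ * M + N * κ ≤ ε'/6 := by linarith [hκM]
    have hηε : η = ε'/6 := rfl
    linarith [h1, h2, hgyN]
  -- minus estimate
  have hminus : 2 - ε'/2 ≤ ‖(-1 : ℝ) • δ y + u‖ := by
    have h1 := hlow (-1) h hh1
    have h2 := hdiff h hh1 (fun e he => (hgh e he).2)
    have h5 : (N:ℝ) * κ * M + N * κ ≤ ε'/6 := by linarith [hκM]
    have hηε : η = ε'/6 := rfl
    linarith [h1, h2, hhyN]
  -- conclude
  refine ⟨δ y, hwn, ?_, ?_⟩
  · have htri : ‖δ y + u‖ ≤ ‖z + δ y‖ + ‖u - z‖ := by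
      have heq : (z + δ y) + (u - z) = δ y + u := by abel
      have := norm_add_le (z + δ y) (u - z)
      rw [heq] at this
      exact this
    have huz : ‖u - z‖ < η := by rw [norm_sub_rev]; exact hud
    have : 2 - 2*ε'/3 < ‖z + δ y‖ := by
      have hηε : η = ε'/6 := rfl
      linarith [hplus, htri, huz]
    linarith
  · have htri : ‖(-1 : ℝ) • δ y + u‖ ≤ ‖z - δ y‖ + ‖u - z‖ := by
      have heq : (z - δ y) + (u - z) = (-1 : ℝ) • δ y + u := by
        rw [neg_smul, one_smul]; abel
      have := norm_add_le (z - δ y) (u - z)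
      rw [heq] at this
      exact this
    have huz : ‖u - z‖ < η := by rw [norm_sub_rev]; exact hud
    have : 2 - 2*ε'/3 < ‖z - δ y‖ := by
      have hηε : η = ε'/6 := rfl
      linarith [hminus, htri, huz]
    linarith
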